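/- Let (X,d) be a metric space whose underlying set X is finite and nonempty, and suppose (X,d) satisfies the tie-breaking rule. Then the basic geodesic graph of (X,d) is a tree (connected and acyclic) if and only if (X,d) satisfies the fourth-point condition. -/

import Mathlib

/-- A chain of intermediate points witnessing that the pair `{x, x'}` is non-basic:
`k ≥ 1` pairwise distinct intermediate points, each different from `x` and `x'`,
along which the distances sum to `dist x x'`. -/
def IsNonBasicChain {X : Type*} [MetricSpace X] (x x' : X) : Prop :=
  ∃ (k : ℕ) (p : Fin (k + 2) → X), 1 ≤ k ∧ Function.Injective p ∧
    p 0 = x ∧ p (Fin.last (k + 1)) = x' ∧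
    dist x x' = ∑ i : Fin (k + 1), dist (p i.castSucc) (p i.succ)

/-- The unordered pair `{x, x'}` is a non-basic edge. -/
def IsNonBasicEdge {X : Type*} [MetricSpace X] (x x' : X) : Prop :=
  IsNonBasicChain x x' ∨ IsNonBasicChain x' x

/-- The unordered pair `{x, x'}` is a basic edge. -/
def IsBasicEdge {X : Type*} [MetricSpace X] (x x' : X) : Prop :=
  x ≠ x' ∧ ¬ IsNonBasicEdge x x'

/-- The basic geodesic graph: the simple graph on `X` whose edges are the basic edges. -/
def basicGeodesicGraph (X : Type*) [MetricSpace X] : SimpleGraph X where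
  Adj x y := IsBasicEdge x y
  symm := ⟨fun x y ⟨h1, h2⟩ => ⟨h1.symm, fun h => h2 h.symm⟩⟩
  loopless := ⟨fun x ⟨h1, _⟩ => h1 rfl⟩

/-- The fourth-point condition. -/
def FourthPointCondition (X : Type*) [MetricSpace X] : Prop :=
  ∀ x y z : X, ∃ p : X,
    dist x p + dist y p + dist z p = (dist x y + dist y z + dist z x) / 2

/-- The tie-breaking rule: distances of distinct unordered pairs are distinct. -/
def TieBreakingRule (X : Type*) [MetricSpace X] : Prop :=
  ∀ x y u v : X, x ≠ y → u ≠ v → ({x, y} : Set X) ≠ {u, v} → dist x y ≠ dist u v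

open SimpleGraph.Walk

namespace BGG

set_option linter.unusedSectionVars false

variable {X : Type*} [MetricSpace X]

/-- weight of a walk -/
def wt {G : SimpleGraph X} : ∀ {u v : X}, G.Walk u v → ℝ
  | _, _, .nil => 0
  | _, _, @SimpleGraph.Walk.cons _ _ u b _ _ p => dist u b + wt p

@[simp] lemma wt_nil {G : SimpleGraph X} {u : X} : wt (.nil : G.Walk u u) = 0 := rfl
@[simp] lemma wt_cons {G : SimpleGraph X} {u b v : X} (h : G.Adj u b) (p : G.Walk b v) :
    wt (.cons h p) = dist u b + wt p := rfl

lemma wt_nonneg {G : SimpleGraph X} {u v : X} (p : G.Walk u v) : 0 ≤ wt p := by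
  induction p with
  | nil => simp
  | @cons u b v h p ih =>
    have := dist_nonneg (x := u) (y := b); simp only [wt_cons]; linarith

lemma dist_le_wt {G : SimpleGraph X} {u v : X} (p : G.Walk u v) : dist u v ≤ wt p := by
  induction p with
  | nil => simp
  | @cons u b v h p ih =>
    calc dist u v ≤ dist u b + dist b v := dist_triangle _ _ _
    _ ≤ dist u b + wt p := by linarith
    _ = wt (.cons h p) := rfl

lemma wt_append {G : SimpleGraph X} {u v w : X} (p : G.Walk u v) (q : G.Walk v w) :
    wt (p.append q) = wt p + wt q := by
  induction p with
  | nil => simp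
  | cons h p ih => simp [cons_append, ih]; ring

lemma wt_reverse {G : SimpleGraph X} {u v : X} (p : G.Walk u v) : wt p.reverse = wt p := by
  induction p with
  | nil => simp
  | cons h p ih =>
    rw [reverse_cons, wt_append, ih, wt_cons, wt_cons, wt_nil, dist_comm]; ring

lemma wt_dropUntil_le [DecidableEq X] {G : SimpleGraph X} {u v w : X} (p : G.Walk u v)
    (h : w ∈ p.support) : wt (p.dropUntil w h) ≤ wt p := by
  have hs := congrArg wt (p.take_spec h)
  rw [wt_append] at hs
  have := wt_nonneg (p.takeUntil w h)
  linarith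

lemma wt_take_drop [DecidableEq X] {G : SimpleGraph X} {u v w : X} (p : G.Walk u v)
    (h : w ∈ p.support) : wt (p.takeUntil w h) + wt (p.dropUntil w h) = wt p := by
  have hs := congrArg wt (p.take_spec h)
  rwa [wt_append] at hs

lemma wt_bypass_le [DecidableEq X] {G : SimpleGraph X} {u v : X} (p : G.Walk u v) :
    wt p.bypass ≤ wt p := by
  induction p with
  | nil => simp [SimpleGraph.Walk.bypass]
  | @cons u b v h p ih =>
    simp only [SimpleGraph.Walk.bypass]
    split_ifs with hs
    · have h1 := wt_dropUntil_le p.bypass hs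
      have h2 := dist_nonneg (x := u) (y := b)
      rw [wt_cons]
      linarith
    · simp only [wt_cons]; linarith

end BGG

namespace BGG
variable {X : Type*} [MetricSpace X]

lemma wt_copy {G : SimpleGraph X} {u v u' v' : X} (p : G.Walk u v) (hu : u = u') (hv : v = v') :
    wt (p.copy hu hv) = wt p := by subst hu; subst hv; rfl

lemma term_lt_sum {k : ℕ} (hk : 1 ≤ k) (f : Fin (k+1) → ℝ) (hpos : ∀ i, 0 < f i) (i : Fin (k+1)) :
    f i < ∑ j, f j := by
  obtain ⟨j, hj⟩ := Fintype.exists_ne_of_one_lt_card (by simp only [Fintype.card_fin]; omega) i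
  exact Finset.single_lt_sum hj (Finset.mem_univ i) (Finset.mem_univ j) (hpos j)
    (fun k _ _ => (hpos k).le)

lemma concat_walks {G : SimpleGraph X} : ∀ (m : ℕ) (p : Fin (m+1) → X),
    (∀ i : Fin m, ∃ W : G.Walk (p i.castSucc) (p i.succ), wt W = dist (p i.castSucc) (p i.succ)) →
    ∃ W : G.Walk (p 0) (p (Fin.last m)), wt W = ∑ i : Fin m, dist (p i.castSucc) (p i.succ) := by
  intro m
  induction m with
  | zero =>
    intro p _
    exact ⟨(SimpleGraph.Walk.nil : G.Walk (p 0) (p 0)).copy rfl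
      (congrArg p (by rfl : (0 : Fin 1) = Fin.last 0)), by rw [wt_copy]; simp⟩
  | succ m ih =>
    intro p hp
    obtain ⟨W1, hW1⟩ := ih (p ∘ Fin.castSucc) (fun i => by
      obtain ⟨W, hW⟩ := hp i.castSucc
      refine ⟨W.copy rfl (congrArg p (Fin.succ_castSucc i)), ?_⟩
      rw [wt_copy, hW]
      simp only [Function.comp_apply, ← Fin.succ_castSucc])
    obtain ⟨W2, hW2⟩ := hp (Fin.last m)
    refine ⟨(W1.copy (@id ((p ∘ Fin.castSucc) 0 = p 0) rfl) rfl).append (W2.copy (by simp) (congrArg p (Fin.succ_last m))), ?_⟩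
    rw [wt_append, wt_copy, wt_copy, hW1, hW2, Fin.sum_univ_castSucc]
    have : ∀ i : Fin m, dist ((p ∘ Fin.castSucc) i.castSucc) ((p ∘ Fin.castSucc) i.succ)
        = dist (p i.castSucc.castSucc) (p i.castSucc.succ) := fun i => by
      simp only [Function.comp_apply, ← Fin.succ_castSucc]
    rw [Finset.sum_congr rfl (fun i _ => this i)]

lemma chain_walk {x y : X} (hch : IsNonBasicChain x y)
    (H : ∀ u v : X, u ≠ v → dist u v < dist x y →
      ∃ W : (basicGeodesicGraph X).Walk u v, wt W = dist u v) :
    ∃ W : (basicGeodesicGraph X).Walk x y, wt W = dist x y := by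
  obtain ⟨k, p, hk, hinj, h0, hl, hsum⟩ := hch
  have hne : ∀ i : Fin (k+1), p i.castSucc ≠ p i.succ := fun i hEq =>
    (Fin.castSucc_lt_succ : i.castSucc < i.succ).ne (hinj hEq)
  have hpos : ∀ i : Fin (k+1), 0 < dist (p i.castSucc) (p i.succ) := fun i => dist_pos.2 (hne i)
  have hlt : ∀ i : Fin (k+1), dist (p i.castSucc) (p i.succ) < dist x y := by
    intro i; rw [hsum]; exact term_lt_sum hk _ hpos i
  obtain ⟨W, hW⟩ := concat_walks (k+1) p (fun i => H _ _ (hne i) (hlt i))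
  exact ⟨W.copy h0 hl, by rw [wt_copy, hW, hsum]⟩

lemma exists_geodesic_walk [Fintype X] : ∀ x y : X, x ≠ y →
    ∃ W : (basicGeodesicGraph X).Walk x y, wt W = dist x y := by
  classical
  set μ : X → X → ℕ := fun x y =>
    (Finset.univ.filter (fun q : X × X => dist q.1 q.2 < dist x y)).card with hμ
  have key : ∀ n (x y : X), x ≠ y → μ x y ≤ n →
      ∃ W : (basicGeodesicGraph X).Walk x y, wt W = dist x y := by
    intro n
    induction n using Nat.strong_induction_on with
    | _ n ih =>
      intro x y hxy hn
      have H : ∀ u v : X, u ≠ v → dist u v < dist x y →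
          ∃ W : (basicGeodesicGraph X).Walk u v, wt W = dist u v := by
        intro u v huv hlt
        have hsub : (Finset.univ.filter (fun q : X × X => dist q.1 q.2 < dist u v)) ⊆
            (Finset.univ.filter (fun q : X × X => dist q.1 q.2 < dist x y)) := by
          intro q hq
          simp only [Finset.mem_filter, Finset.mem_univ, true_and] at *
          linarith
        have hmem : (u,v) ∈ Finset.univ.filter (fun q : X × X => dist q.1 q.2 < dist x y) := by
          simp [hlt]
        have hnot : (u,v) ∉ Finset.univ.filter (fun q : X × X => dist q.1 q.2 < dist u v) := by
          simp
        have hlt' : μ u v < μ x y :=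
          Finset.card_lt_card ((Finset.ssubset_iff_of_subset hsub).2 ⟨(u,v), hmem, hnot⟩)
        exact ih (μ u v) (lt_of_lt_of_le hlt' hn) u v huv le_rfl
      by_cases hb : IsNonBasicEdge x y
      · rcases hb with hch | hch
        · exact chain_walk hch H
        · obtain ⟨W, hW⟩ := chain_walk hch
            (fun u v huv hlt => H u v huv (by rwa [dist_comm y x] at hlt))
          exact ⟨W.reverse, by rw [wt_reverse, hW, dist_comm]⟩
      · exact ⟨.cons (@id ((basicGeodesicGraph X).Adj x y) ⟨hxy, hb⟩) .nil, by simp⟩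
  intro x y hxy; exact key (μ x y) x y hxy le_rfl

lemma exists_geodesic_path [Fintype X] (x y : X) (h : x ≠ y) :
    ∃ W : (basicGeodesicGraph X).Walk x y, W.IsPath ∧ wt W = dist x y := by
  classical
  obtain ⟨W, hW⟩ := exists_geodesic_walk x y h
  exact ⟨W.bypass, W.bypass_isPath,
    le_antisymm (hW ▸ wt_bypass_le W) (dist_le_wt _)⟩

end BGG

namespace BGG
section L2
variable {X : Type*} [MetricSpace X]

lemma btw_nonbasic {a b p : X} (hab : a ≠ b) (hpa : p ≠ a) (hpb : p ≠ b)
    (h : dist a b = dist a p + dist p b) : IsNonBasicEdge a b := by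
  left
  refine ⟨1, ![a, p, b], le_refl 1, ?_, rfl, rfl, ?_⟩
  · intro i j hij
    fin_cases i <;> fin_cases j <;> simp_all <;> tauto
  · rw [Fin.sum_univ_two]
    norm_num
    exact h

lemma median (h4 : FourthPointCondition X) (x y z : X) :
    ∃ p, dist x y = dist x p + dist p y ∧ dist x z = dist x p + dist p z ∧
      dist y z = dist y p + dist p z := by
  obtain ⟨p, hp⟩ := h4 x y z
  refine ⟨p, ?_, ?_, ?_⟩ <;>
    linarith [dist_triangle x p y, dist_triangle x p z, dist_triangle y p z,
      dist_comm x p, dist_comm y p, dist_comm z p, dist_comm x y, dist_comm y z,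
      dist_comm x z, dist_comm z x]

lemma basic_forced {a b : X} (hb : IsBasicEdge a b) {p : X}
    (h : dist a b = dist a p + dist p b) : p = a ∨ p = b := by
  by_contra hc
  push_neg at hc
  exact hb.2 (btw_nonbasic hb.1 hc.1 hc.2 h)

variable {v0 v1 : X}

lemma memAB (h4 : FourthPointCondition X) (h01 : IsBasicEdge v0 v1) {z : X}
    (hz0 : z ≠ v0) (hz1 : z ≠ v1) :
    dist v0 z = dist v0 v1 + dist v1 z ∨ dist v1 z = dist v0 v1 + dist v0 z := by
  obtain ⟨p, hxy, hxz, hyz⟩ := median h4 v0 v1 z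
  rcases basic_forced h01 hxy with rfl | rfl
  · right; rw [dist_comm v1 p] at hyz; exact hyz
  · left; exact hxz

lemma forced_near (h4 : FourthPointCondition X) (h01 : IsBasicEdge v0 v1) {u : X}
    (h1u : IsBasicEdge v1 u) (hu0 : u ≠ v0) (hu1 : u ≠ v1) :
    dist v0 u = dist v0 v1 + dist v1 u := by
  obtain ⟨p, hxy, hxz, hyz⟩ := median h4 v0 v1 u
  rcases basic_forced h01 hxy with rfl | rfl
  · rcases basic_forced h1u hyz with h | h
    · exact absurd h h01.1
    · exact absurd h.symm hu0
  · exact hxz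

lemma forced_near0 (h4 : FourthPointCondition X) (h01 : IsBasicEdge v0 v1) {u : X}
    (h0u : IsBasicEdge v0 u) (hu0 : u ≠ v0) (hu1 : u ≠ v1) :
    dist v1 u = dist v0 v1 + dist v0 u := by
  obtain ⟨p, hxy, hxz, hyz⟩ := median h4 v0 v1 u
  rcases basic_forced h01 hxy with rfl | rfl
  · rw [dist_comm v1 p] at hyz; exact hyz
  · rcases basic_forced h0u hxz with h | h
    · exact absurd h.symm h01.1
    · exact absurd h.symm hu1

lemma AB_not_adj (htie : TieBreakingRule X) (h4 : FourthPointCondition X)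
    (h01 : IsBasicEdge v0 v1) {u u' : X}
    (hA : dist v0 u = dist v0 v1 + dist v1 u) (hB : dist v1 u' = dist v0 v1 + dist v0 u')
    (hu0 : u ≠ v0) (hu1 : u ≠ v1) (hu'0 : u' ≠ v0) (hu'1 : u' ≠ v1)
    (hadj : IsBasicEdge u u') : False := by
  have hd01 : 0 < dist v0 v1 := dist_pos.2 h01.1
  have hsets : ({v0, v1} : Set X) ≠ {u, u'} := by
    intro hEq
    have hu : u ∈ ({u, u'} : Set X) := by simp
    rw [← hEq] at hu
    rcases hu with h | h
    · exact hu0 h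
    · exact hu1 h
  have hne := htie v0 v1 u u' h01.1 hadj.1 hsets
  obtain ⟨p1, h1uu, h1u0, h1u'0⟩ := median h4 u u' v0
  obtain ⟨p2, h2uu, h2u1, h2u'1⟩ := median h4 u u' v1
  rcases basic_forced hadj h1uu with hp1 | hp1
  · -- p1 = u : h1u'0 : d u' v0 = d u' u + d u v0
    rw [hp1] at h1u'0
    linarith [dist_triangle v1 u u', dist_comm u u', dist_comm u v0, dist_comm u v1,
      dist_comm u' v0, dist_comm u' v1, dist_comm v0 v1]
  · -- p1 = u' : h1u0 : d u v0 = d u u' + d u' v0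
    rw [hp1] at h1u0
    rcases basic_forced hadj h2uu with hp2 | hp2
    · -- p2 = u : h2u'1 : d u' v1 = d u' u + d u v1
      rw [hp2] at h2u'1
      have heq : dist v0 v1 = dist u u' := by
        linarith [dist_comm u u', dist_comm u v0, dist_comm u v1,
          dist_comm u' v0, dist_comm u' v1, dist_comm v0 v1]
      exact hne heq
    · -- p2 = u' : h2u1 : d u v1 = d u u' + d u' v1
      rw [hp2] at h2u1
      linarith [dist_comm u u', dist_comm u v0, dist_comm u v1,
        dist_comm u' v0, dist_comm u' v1, dist_comm v0 v1]

end L2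
end BGG

namespace BGG
section L2b
variable {X : Type*} [MetricSpace X]

lemma no_A_path (htie : TieBreakingRule X) (h4 : FourthPointCondition X) {v0 v1 : X}
    (h01 : IsBasicEdge v0 v1) :
    ∀ (n : ℕ) (a : X) (r : (basicGeodesicGraph X).Walk a v0), r.length ≤ n → r.IsPath →
      dist v0 a = dist v0 v1 + dist v1 a → a ≠ v0 → a ≠ v1 → v1 ∉ r.support → False := by
  intro n
  induction n with
  | zero =>
    intro a r hlen _ _ ha0 _ _
    cases r with
    | nil => exact ha0 rfl
    | cons hab r' => simp at hlen
  | succ m ih =>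
    intro a r hlen hr hA ha0 ha1 hv1
    cases r with
    | nil => exact ha0 rfl
    | @cons _ b _ hab r' =>
      by_cases hb0 : b = v0
      · subst hb0
        have hBa := forced_near0 h4 h01 hab.symm ha0 ha1
        have hpos := dist_pos.2 h01.1
        linarith
      · have hbv1 : b ≠ v1 := by
          intro h
          apply hv1
          rw [SimpleGraph.Walk.support_cons]
          exact List.mem_cons_of_mem _ (h ▸ r'.start_mem_support)
        rcases memAB h4 h01 hb0 hbv1 with hAb | hBb
        · refine ih b r' ?_ hr.of_cons hAb hb0 hbv1 ?_
          · have : r'.length + 1 ≤ m + 1 := by simpa using hlen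
            omega
          · intro h
            exact hv1 (by rw [SimpleGraph.Walk.support_cons]; exact List.mem_cons_of_mem _ h)
        · exact AB_not_adj htie h4 h01 hA hBb ha0 ha1 hb0 hbv1 hab

lemma acyclic_of_4pc (htie : TieBreakingRule X) (h4 : FourthPointCondition X) :
    (basicGeodesicGraph X).IsAcyclic := by
  intro v c hc
  cases c with
  | nil => exact hc.ne_nil rfl
  | @cons _ w _ h q =>
    have hqsup : q.support.Nodup := by
      have := hc.support_nodup
      rwa [SimpleGraph.Walk.support_cons] at this
    cases q with
    | nil => exact (basicGeodesicGraph X).irrefl h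
    | @cons _ u _ h2 q2 =>
      rw [SimpleGraph.Walk.support_cons, List.nodup_cons] at hqsup
      obtain ⟨hwq2, hq2nodup⟩ := hqsup
      have hq2path : q2.IsPath := SimpleGraph.Walk.IsPath.mk' hq2nodup
      by_cases hu : u = v
      · subst hu
        have : q2 = SimpleGraph.Walk.nil := (SimpleGraph.Walk.isPath_iff_eq_nil).mp hq2path
        subst this
        have := hc.three_le_length
        simp at this
      · have huw : u ≠ w := h2.ne'
        have hAu : dist v u = dist v w + dist w u := forced_near h4 h h2 hu huw
        exact no_A_path htie h4 h q2.length u q2 le_rfl hq2path hAu hu huw hwq2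

end L2b
end BGG

namespace BGG
section L3
variable {X : Type*} [MetricSpace X] [Fintype X]

lemma path_unique (hT : (basicGeodesicGraph X).IsTree) {u v : X}
    (P Q : (basicGeodesicGraph X).Walk u v) (hP : P.IsPath) (hQ : Q.IsPath) : P = Q := by
  obtain ⟨R, _, hR⟩ := hT.existsUnique_path u v
  rw [hR P hP, hR Q hQ]

lemma wt_eq_dist (hT : (basicGeodesicGraph X).IsTree) {u v : X}
    (P : (basicGeodesicGraph X).Walk u v) (hP : P.IsPath) : wt P = dist u v := by
  classical
  by_cases h : u = v
  · subst h
    rw [(SimpleGraph.Walk.isPath_iff_eq_nil).mp hP]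
    simp
  · obtain ⟨Q, hQ, hwQ⟩ := exists_geodesic_path u v h
    rw [path_unique hT P Q hP hQ]
    exact hwQ

lemma between_of_mem (hT : (basicGeodesicGraph X).IsTree) {x y u : X}
    (P : (basicGeodesicGraph X).Walk x y) (hP : P.IsPath) (hu : u ∈ P.support) :
    dist x u + dist u y = dist x y := by
  classical
  have h1 := wt_eq_dist hT _ (hP.takeUntil hu)
  have h2 := wt_eq_dist hT _ (hP.dropUntil hu)
  have h3 := wt_take_drop P hu
  rw [wt_eq_dist hT P hP, h1, h2] at h3
  exact h3

lemma exists_snd {G : SimpleGraph X} {x u : X} (T : G.Walk x u) (hxu : x ≠ u) :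
    ∃ (w'' : X) (h : G.Adj x w'') (T' : G.Walk w'' u), T = SimpleGraph.Walk.cons h T' := by
  cases T with
  | nil => exact absurd rfl hxu
  | cons h T' => exact ⟨_, h, T', rfl⟩

lemma second_vertex_mem (hT : (basicGeodesicGraph X).IsTree) {x y z w u : X}
    (h : (basicGeodesicGraph X).Adj x w) (P' : (basicGeodesicGraph X).Walk w y)
    (hP : (SimpleGraph.Walk.cons h P').IsPath) {Q : (basicGeodesicGraph X).Walk x z}
    (hQ : Q.IsPath) (hu : u ∈ Q.support) (hu' : u ∈ (SimpleGraph.Walk.cons h P').support)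
    (hux : u ≠ x) : w ∈ Q.support := by
  classical
  have htake : ((SimpleGraph.Walk.cons h P').takeUntil u hu').IsPath := hP.takeUntil hu'
  have hQt : (Q.takeUntil u hu).IsPath := hQ.takeUntil hu
  have hEq : (SimpleGraph.Walk.cons h P').takeUntil u hu' = Q.takeUntil u hu :=
    path_unique hT _ _ htake hQt
  obtain ⟨w'', h'', T', hT'⟩ := exists_snd ((SimpleGraph.Walk.cons h P').takeUntil u hu')
    (fun hEq2 => hux hEq2.symm)
  have hedge : s(x, w'') ∈ ((SimpleGraph.Walk.cons h P').takeUntil u hu').edges := by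
    rw [hT', SimpleGraph.Walk.edges_cons]
    exact List.mem_cons_self
  have hedge2 := SimpleGraph.Walk.edges_takeUntil_subset _ hu' hedge
  rw [SimpleGraph.Walk.edges_cons] at hedge2
  rcases List.mem_cons.mp hedge2 with heq | hmem
  · -- s(x,w'') = s(x,w)
    have hww : w'' = w := Sym2.congr_right.mp heq
    have hwT : w ∈ ((SimpleGraph.Walk.cons h P').takeUntil u hu').support := by
      rw [hT', SimpleGraph.Walk.support_cons]
      exact List.mem_cons_of_mem _ (hww ▸ T'.start_mem_support)
    rw [hEq] at hwT
    exact SimpleGraph.Walk.support_takeUntil_subset _ hu hwT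
  · exfalso
    have hxs : x ∈ P'.support := SimpleGraph.Walk.fst_mem_support_of_mem_edges P' hmem
    rw [SimpleGraph.Walk.cons_isPath_iff] at hP
    exact hP.2 hxs

lemma rev_append_path (hT : (basicGeodesicGraph X).IsTree) {x y z w : X}
    (h : (basicGeodesicGraph X).Adj x w) (P' : (basicGeodesicGraph X).Walk w y)
    (hP : (SimpleGraph.Walk.cons h P').IsPath) {Q : (basicGeodesicGraph X).Walk x z}
    (hQ : Q.IsPath) (hw : w ∉ Q.support) :
    ((SimpleGraph.Walk.cons h P').reverse.append Q).IsPath := by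
  rw [SimpleGraph.Walk.isPath_def, SimpleGraph.Walk.support_append]
  refine List.Nodup.append hP.reverse.support_nodup ?_ ?_
  · have := hQ.support_nodup
    rw [Q.support_eq_cons] at this
    exact this.of_cons
  · intro a ha ha'
    have haP : a ∈ (SimpleGraph.Walk.cons h P').support := by
      rw [SimpleGraph.Walk.support_reverse] at ha
      exact (List.mem_reverse).mp ha
    have haQ : a ∈ Q.support := by
      rw [Q.support_eq_cons]
      exact List.mem_cons_of_mem _ ha'
    have hax : a ≠ x := by
      intro hEq
      subst hEq
      have := hQ.support_nodup
      rw [Q.support_eq_cons, List.nodup_cons] at this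
      exact this.1 ha'
    exact hw (second_vertex_mem hT h P' hP hQ haQ haP hax)

lemma median_tree (hT : (basicGeodesicGraph X).IsTree) :
    ∀ (n : ℕ) (x y z : X) (P : (basicGeodesicGraph X).Walk x y), P.IsPath → P.length ≤ n →
    ∃ p, dist x y = dist x p + dist p y ∧ dist x z = dist x p + dist p z ∧
      dist y z = dist y p + dist p z := by
  intro n
  induction n with
  | zero =>
    intro x y z P hP hlen
    cases P with
    | nil => exact ⟨x, by simp, by simp, by simp⟩
    | cons h P' => simp at hlen
  | succ m ih =>
    intro x y z P hP hlen
    cases P with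
    | nil => exact ⟨x, by simp, by simp, by simp⟩
    | @cons _ w _ h P' =>
      obtain ⟨Q, hQ, _⟩ := hT.existsUnique_path x z
      by_cases hw : w ∈ Q.support
      · have hxz : dist x w + dist w z = dist x z := between_of_mem hT Q hQ hw
        have hxyw : dist x w + dist w y = dist x y :=
          between_of_mem hT (SimpleGraph.Walk.cons h P') hP
            (by rw [SimpleGraph.Walk.support_cons]
                exact List.mem_cons_of_mem _ P'.start_mem_support)
        obtain ⟨p, h1, h2, h3⟩ := ih w y z P' hP.of_cons
          (by rw [SimpleGraph.Walk.length_cons] at hlen; omega)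
        have tri := dist_triangle x w p
        have tri2 := dist_triangle x p y
        exact ⟨p, by linarith, by linarith, h3⟩
      · have hR := rev_append_path hT h P' hP hQ hw
        have hyz := wt_eq_dist hT _ hR
        rw [wt_append, wt_reverse] at hyz
        have h1 : wt (SimpleGraph.Walk.cons h P') = dist x y := wt_eq_dist hT _ hP
        have h2 : wt Q = dist x z := wt_eq_dist hT _ hQ
        exact ⟨x, by simp, by simp, by linarith [dist_comm x y]⟩

end L3
end BGG

/-- Under the tie-breaking rule, the basic geodesic graph of a finite metric space is
a tree iff the space satisfies the fourth-point condition. -/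
theorem basicGeodesicGraph_isTree_iff_fourthPointCondition
    {X : Type*} [MetricSpace X] [Fintype X] [Nonempty X]
    (htie : TieBreakingRule X) :
    (basicGeodesicGraph X).IsTree ↔ FourthPointCondition X := by
  constructor
  · intro hT x y z
    obtain ⟨P, hP, _⟩ := hT.existsUnique_path x y
    obtain ⟨p, h1, h2, h3⟩ := BGG.median_tree hT P.length x y z P hP le_rfl
    exact ⟨p, by linarith [dist_comm x p, dist_comm y p, dist_comm z p, dist_comm z x]⟩
  · intro h4
    refine ⟨⟨?_⟩, BGG.acyclic_of_4pc htie h4⟩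
    intro x y
    by_cases hxy : x = y
    · exact hxy ▸ SimpleGraph.Reachable.refl x
    · obtain ⟨W, _⟩ := BGG.exists_geodesic_walk x y hxy
      exact ⟨W⟩
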